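/- Let φ : ℂ₀ → ℂ be a non-constant analytic function of the form φ(s) = c₀ s + ψ(s), with c₀ ∈ ℕ₀ and ψ ∈ 𝒟, such that the composition operator C_φ maps A⁺ into itself. Then C_φ : A⁺ → A⁺ is a compact operator if and only if ‖n^{-φ}‖_{A⁺} → 0 as n → ∞; and in that case there exists δ > 0 such that φ(ℂ₀) ⊆ ℂ_δ, i.e. Re φ(s) ≥ δ for all s ∈ ℂ₀. -/

import Mathlib

open Complex Filter
open scoped ENNReal

noncomputable section

/-- `f` has the Dirichlet series `∑ a n * (n+1)^{-s}` on the half-plane `re s > σ`. -/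
def HasDirichletSeriesOn (f : ℂ → ℂ) (a : ℕ → ℂ) (σ : ℝ) : Prop :=
  ∀ s : ℂ, σ < s.re → HasSum (fun n : ℕ => a n * (n + 1 : ℂ) ^ (-s)) (f s)

/-- `f` belongs to the Wiener–Dirichlet algebra `𝒜⁺`, with (absolutely summable)
coefficient sequence `a`, where `a n` is the coefficient of `(n+1)^{-s}`.
The norm of `f` in `𝒜⁺` is `∑' n, Complex.abs (a n)`. -/
def MemAplus (f : ℂ → ℂ) (a : ℕ → ℂ) : Prop :=
  Summable (fun n : ℕ => ‖a n‖) ∧ HasDirichletSeriesOn f a 0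

/-- `ψ` belongs to the class `𝒟` of convergent Dirichlet series: it is analytic on
`re s > 0` and is representable by a convergent Dirichlet series for `re s` large enough. -/
def MemD (ψ : ℂ → ℂ) : Prop :=
  DifferentiableOn ℂ ψ {s : ℂ | 0 < s.re} ∧ ∃ a σ, HasDirichletSeriesOn ψ a σ

/-- The Banach space `ℓ¹(ℕ)` of coefficient sequences, modelling the Wiener–Dirichlet
algebra `𝒜⁺` (the sequence `a` corresponds to the Dirichlet series `∑ a n (n+1)^{-s}`). -/
abbrev l1N := lp (fun _ : ℕ => ℂ) 1

/-- `T` is the composition operator `C_φ` on `𝒜⁺`, read through coefficient sequences: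
for every `a ∈ ℓ¹` and every `s` with `re s > 0`, the Dirichlet series with coefficients
`T a` evaluates at `s` to the Dirichlet series with coefficients `a` evaluated at `φ s`. -/
def IsCompOp (φ : ℂ → ℂ) (T : l1N →L[ℂ] l1N) : Prop :=
  ∀ (a : l1N) (s : ℂ), 0 < s.re →
    ∑' n : ℕ, (T a) n * (n + 1 : ℂ) ^ (-s) = ∑' n : ℕ, a n * (n + 1 : ℂ) ^ (-(φ s))


open scoped Topology

set_option maxHeartbeats 1000000

section Aux

lemma l1_summable (b : l1N) : Summable fun m : ℕ => ‖b m‖ := by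
  have := (lp.memℓp b).summable (p := 1) (by norm_num)
  simpa using this

lemma l1_norm_eq (b : l1N) : ‖b‖ = ∑' m : ℕ, ‖b m‖ := by
  have := lp.norm_eq_tsum_rpow (p := 1) (by norm_num) b
  simpa using this

lemma l1_norm_single (n : ℕ) : ‖(lp.single 1 n (1:ℂ) : l1N)‖ = 1 := by
  have := lp.norm_single (p := 1) (E := fun _ : ℕ => ℂ) (by norm_num) n (1:ℂ)
  simpa using this

lemma cpow_abs (m : ℕ) (s : ℂ) : ‖(m + 1 : ℂ) ^ (-s)‖ = ((m:ℝ) + 1) ^ (-s.re) := by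
  have h : ((m:ℝ) + 1 : ℝ) > 0 := by positivity
  rw [show (m + 1 : ℂ) = (((m:ℝ) + 1 : ℝ) : ℂ) by push_cast; ring]
  rw [Complex.norm_cpow_eq_rpow_re_of_pos h]
  simp

lemma cpow_abs_le_one (m : ℕ) {s : ℂ} (hs : 0 ≤ s.re) : ‖(m + 1 : ℂ) ^ (-s)‖ ≤ 1 := by
  rw [cpow_abs]
  exact Real.rpow_le_one_of_one_le_of_nonpos
    (by linarith [Nat.cast_nonneg (α := ℝ) m]) (by simpa using hs)

variable {φ : ℂ → ℂ} {T : l1N →L[ℂ] l1N}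

lemma summable_key (b : l1N) {s : ℂ} (hs : 0 < s.re) :
    Summable fun m : ℕ => b m * (m + 1 : ℂ) ^ (-s) := by
  apply Summable.of_norm_bounded (l1_summable b)
  intro m
  rw [norm_mul]
  calc ‖b m‖ * ‖(m + 1 : ℂ) ^ (-s)‖ ≤ ‖b m‖ * 1 :=
        mul_le_mul_of_nonneg_left (cpow_abs_le_one m hs.le) (norm_nonneg _)
    _ = ‖b m‖ := mul_one _

lemma hasSum_key (hT : IsCompOp φ T) (n : ℕ) {s : ℂ} (hs : 0 < s.re) :
    HasSum (fun m : ℕ => (T (lp.single 1 n (1:ℂ))) m * (m + 1 : ℂ) ^ (-s))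
      ((n + 1 : ℂ) ^ (-(φ s))) := by
  have hsum := summable_key (T (lp.single 1 n (1:ℂ))) hs
  have h1 := hT (lp.single 1 n (1:ℂ)) s hs
  have h2 : ∑' m : ℕ, (lp.single 1 n (1:ℂ) : l1N) m * (m + 1 : ℂ) ^ (-(φ s))
      = (n + 1 : ℂ) ^ (-(φ s)) := by
    rw [tsum_eq_single n]
    · rw [lp.single_apply_self, one_mul]
    · intro m hm
      rw [lp.single_apply_ne 1 n _ hm, zero_mul]
  have := hsum.hasSum
  rwa [h1, h2] at this

lemma val_le_norm (hT : IsCompOp φ T) (n : ℕ) {s : ℂ} (hs : 0 < s.re) :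
    ((n:ℝ) + 1) ^ (-(φ s).re) ≤ ‖T (lp.single 1 n (1:ℂ))‖ := by
  set b := T (lp.single 1 n (1:ℂ))
  have h := (hasSum_key hT n hs).tsum_eq
  have h1 : ‖(n + 1 : ℂ) ^ (-(φ s))‖ ≤ ∑' m : ℕ, ‖b m * (m + 1 : ℂ) ^ (-s)‖ := by
    rw [← h]; exact norm_tsum_le_tsum_norm ((summable_key b hs).norm)
  have h2 : ∑' m : ℕ, ‖b m * (m + 1 : ℂ) ^ (-s)‖ ≤ ∑' m : ℕ, ‖b m‖ := by
    apply Summable.tsum_le_tsum _ (summable_key b hs).norm (l1_summable b)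
    intro m
    rw [norm_mul]
    calc ‖b m‖ * ‖(m + 1 : ℂ) ^ (-s)‖ ≤ ‖b m‖ * 1 :=
          mul_le_mul_of_nonneg_left (cpow_abs_le_one m hs.le) (norm_nonneg _)
      _ = ‖b m‖ := mul_one _
  rw [cpow_abs] at h1
  rw [l1_norm_eq]
  exact h1.trans h2

lemma norm_op_single_le (T : l1N →L[ℂ] l1N) (n : ℕ) : ‖T (lp.single 1 n (1:ℂ))‖ ≤ ‖T‖ := by
  calc ‖T (lp.single 1 n (1:ℂ))‖ ≤ ‖T‖ * ‖(lp.single 1 n (1:ℂ) : l1N)‖ := T.le_opNorm _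
    _ = ‖T‖ := by rw [l1_norm_single, mul_one]

lemma re_nonneg (hT : IsCompOp φ T) {s : ℂ} (hs : 0 < s.re) : 0 ≤ (φ s).re := by
  by_contra hneg
  push_neg at hneg
  have hb : ∀ n : ℕ, ((n:ℝ) + 1) ^ (-(φ s).re) ≤ ‖T‖ := fun n =>
    (val_le_norm hT n hs).trans (norm_op_single_le T n)
  have htend : Tendsto (fun n : ℕ => ((n:ℝ) + 1) ^ (-(φ s).re)) atTop atTop := by
    apply (tendsto_rpow_atTop (by linarith : (0:ℝ) < -(φ s).re)).comp
    exact tendsto_atTop_add_const_right _ 1 tendsto_natCast_atTop_atTop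
  obtain ⟨n, hn⟩ := (htend.eventually_gt_atTop ‖T‖).exists
  exact absurd (hb n) (not_le.2 hn)

lemma re_pos (hT : IsCompOp φ T)
    (hanal : DifferentiableOn ℂ φ {s : ℂ | 0 < s.re})
    (hnc : ∃ s₁ s₂ : ℂ, 0 < s₁.re ∧ 0 < s₂.re ∧ φ s₁ ≠ φ s₂)
    {s : ℂ} (hs : 0 < s.re) : 0 < (φ s).re := by
  have hU : IsOpen {s : ℂ | 0 < s.re} := by
    have : {s : ℂ | 0 < s.re} = Complex.re ⁻¹' Set.Ioi 0 := rfl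
    rw [this]; exact isOpen_Ioi.preimage Complex.continuous_re
  have hconn : IsPreconnected {s : ℂ | 0 < s.re} :=
    (convex_halfSpace_re_gt 0).isPreconnected
  have hA : AnalyticOnNhd ℂ φ {s : ℂ | 0 < s.re} := hanal.analyticOnNhd hU
  rcases hA.is_constant_or_isOpen hconn with ⟨w, hw⟩ | hopen
  · obtain ⟨s₁, s₂, h₁, h₂, hne⟩ := hnc
    exact absurd ((hw s₁ h₁).trans (hw s₂ h₂).symm) hne
  · have himg : IsOpen (φ '' {s : ℂ | 0 < s.re}) := hopen _ le_rfl hU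
    rcases lt_or_eq_of_le (re_nonneg hT hs) with h | h
    · exact h
    · exfalso
      have hmem : φ s ∈ φ '' {s : ℂ | 0 < s.re} := ⟨s, hs, rfl⟩
      obtain ⟨ε, hε, hball⟩ := Metric.isOpen_iff.1 himg _ hmem
      have hwmem : φ s - (ε/2 : ℝ) ∈ Metric.ball (φ s) ε := by
        rw [Metric.mem_ball, Complex.dist_eq,
          show φ s - (ε/2:ℝ) - φ s = -((ε/2:ℝ):ℂ) by ring]
        rw [norm_neg, Complex.norm_real, Real.norm_eq_abs, abs_of_pos (by linarith)]
        linarith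
      obtain ⟨s', hs', heq⟩ := hball hwmem
      have : (φ s').re = -(ε/2) := by
        rw [heq]; simp [← h]
      linarith [re_nonneg hT hs']

lemma coord_tendsto (hT : IsCompOp φ T)
    (hanal : DifferentiableOn ℂ φ {s : ℂ | 0 < s.re})
    (hnc : ∃ s₁ s₂ : ℂ, 0 < s₁.re ∧ 0 < s₂.re ∧ φ s₁ ≠ φ s₂) (m : ℕ) :
    Tendsto (fun n : ℕ => (T (lp.single 1 n (1:ℂ))) m) atTop (𝓝 0) := by
  induction m using Nat.strong_induction_on with
  | _ m IH =>
  rw [NormedAddCommGroup.tendsto_nhds_zero]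
  intro ε hε
  set r : ℝ := ((m:ℝ)+1)/((m:ℝ)+2) with hr_def
  have hr0 : (0:ℝ) ≤ r := by positivity
  have hr1 : r < 1 := by
    rw [hr_def, div_lt_one (by positivity)]; linarith
  have htr : Tendsto (fun k : ℕ => ‖T‖ * r ^ k) atTop (𝓝 0) := by
    simpa using (tendsto_pow_atTop_nhds_zero_of_lt_one hr0 hr1).const_mul ‖T‖
  obtain ⟨k, hk1, hkr⟩ : ∃ k : ℕ, 1 ≤ k ∧ ‖T‖ * r ^ k < ε/2 := by
    obtain ⟨k, hk⟩ := ((htr.eventually_lt_const (by linarith : (0:ℝ) < ε/2)).and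
      (eventually_ge_atTop 1)).exists
    exact ⟨k, hk.2, hk.1⟩
  have hkre : (0:ℝ) < ((k:ℂ)).re := by
    simp only [Complex.natCast_re]
    exact_mod_cast hk1
  have hknn : (0:ℝ) ≤ ((k:ℂ)).re := hkre.le
  set c : ℝ := (φ (k:ℂ)).re with hc_def
  have hc : 0 < c := re_pos hT hanal hnc hkre
  set P : ℝ := ((m:ℝ)+1)^k with hP_def
  have hP0 : (0:ℝ) < P := by positivity
  have key : ∀ n : ℕ, ‖(T (lp.single 1 n (1:ℂ))) m‖ ≤
      P * ((n:ℝ)+1) ^ (-c) +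
      P * (∑ j ∈ Finset.range m, ‖(T (lp.single 1 n (1:ℂ))) j‖) + ‖T‖ * r ^ k := by
    intro n
    set b := T (lp.single 1 n (1:ℂ)) with hb_def
    set f : ℕ → ℂ := fun j => b j * (j + 1 : ℂ) ^ (-(k:ℂ)) with hf_def
    have hfs : Summable f := summable_key b hkre
    have hS : HasSum f ((n + 1 : ℂ) ^ (-(φ (k:ℂ)))) := hasSum_key hT n hkre
    have hsplit := Summable.tsum_eq_add_tsum_ite hfs m
    rw [hS.tsum_eq] at hsplit
    have hfm : f m = (n + 1 : ℂ) ^ (-(φ (k:ℂ))) - ∑' j, if j = m then 0 else f j := by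
      rw [hsplit]; ring
    set t : ℝ := (((m:ℝ)+2)^k)⁻¹ with ht_def
    have ht0 : (0:ℝ) ≤ t := by positivity
    set h : ℕ → ℝ := fun j => t * ‖b j‖ + (if j < m then ‖b j‖ else 0) with hh_def
    have hsum2 : Summable (fun j => if j < m then ‖b j‖ else 0) := by
      apply summable_of_ne_finset_zero (s := Finset.range m)
      intro j hj
      rw [if_neg (by simpa using hj)]
    have hsumh : Summable h := ((l1_summable b).mul_left t).add hsum2
    have hpt : ∀ j, ‖if j = m then 0 else f j‖ ≤ h j := by
      intro j
      by_cases hjm : j = m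
      · rw [if_pos hjm]
        simp only [norm_zero, hh_def]
        positivity
      · rw [if_neg hjm, hf_def, norm_mul]
        have habs : ‖(j + 1 : ℂ) ^ (-(k:ℂ))‖ = (((j:ℝ)+1)^k)⁻¹ := by
          rw [cpow_abs]
          rw [Complex.natCast_re, Real.rpow_neg (by positivity), Real.rpow_natCast]
        rcases lt_or_gt_of_ne hjm with hlt | hgt
        · calc ‖b j‖ * ‖(j + 1 : ℂ) ^ (-(k:ℂ))‖ ≤ ‖b j‖ * 1 :=
              mul_le_mul_of_nonneg_left (cpow_abs_le_one j hknn) (norm_nonneg _)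
          _ = ‖b j‖ := mul_one _
          _ ≤ h j := by
              rw [hh_def]; simp only [if_pos hlt]
              have : 0 ≤ t * ‖b j‖ := by positivity
              linarith
        · have hbase : ((m:ℝ)+2)^k ≤ ((j:ℝ)+1)^k := by
            apply pow_le_pow_left₀ (by positivity)
            have : (m:ℝ) + 1 ≤ (j:ℝ) := by exact_mod_cast hgt
            linarith
          have : (((j:ℝ)+1)^k)⁻¹ ≤ t := by
            rw [ht_def]
            exact inv_anti₀ (by positivity) hbase
          calc ‖b j‖ * ‖(j + 1 : ℂ) ^ (-(k:ℂ))‖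
              = ‖(j + 1 : ℂ) ^ (-(k:ℂ))‖ * ‖b j‖ := mul_comm _ _
            _ ≤ t * ‖b j‖ := by
                rw [habs]
                exact mul_le_mul_of_nonneg_right this (norm_nonneg _)
            _ ≤ h j := by
                rw [hh_def]
                have : (0:ℝ) ≤ if j < m then ‖b j‖ else 0 := by positivity
                simp only []
                linarith
    have hsumite : Summable (fun j => ‖if j = m then 0 else f j‖) :=
      Summable.of_nonneg_of_le (fun _ => norm_nonneg _) hpt hsumh
    have hrem : ‖∑' j, if j = m then 0 else f j‖ ≤ t * ‖T‖ + ∑ j ∈ Finset.range m, ‖b j‖ := by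
      calc ‖∑' j, if j = m then 0 else f j‖ ≤ ∑' j, ‖if j = m then 0 else f j‖ :=
            norm_tsum_le_tsum_norm hsumite
        _ ≤ ∑' j, h j := Summable.tsum_le_tsum hpt hsumite hsumh
        _ = t * (∑' j, ‖b j‖) + ∑' j, (if j < m then ‖b j‖ else 0) := by
            rw [hh_def, Summable.tsum_add ((l1_summable b).mul_left t) hsum2, tsum_mul_left]
        _ = t * ‖b‖ + ∑ j ∈ Finset.range m, ‖b j‖ := by
            rw [← l1_norm_eq]
            congr 1
            rw [tsum_eq_sum (s := Finset.range m)
              (fun j hj => by rw [if_neg (by simpa using hj)])]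
            exact Finset.sum_congr rfl fun j hj => by rw [if_pos (Finset.mem_range.1 hj)]
        _ ≤ t * ‖T‖ + ∑ j ∈ Finset.range m, ‖b j‖ := by
            have := norm_op_single_le T n
            rw [← hb_def] at this
            nlinarith
    have hfm_norm : ‖f m‖ ≤ ((n:ℝ)+1) ^ (-c) + (t * ‖T‖ + ∑ j ∈ Finset.range m, ‖b j‖) := by
      rw [hfm]
      refine (norm_sub_le _ _).trans ?_
      gcongr
      rw [cpow_abs]
    have habsm : ‖f m‖ = ‖b m‖ * P⁻¹ := by
      rw [hf_def, norm_mul, cpow_abs, Complex.natCast_re, Real.rpow_neg (by positivity),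
        Real.rpow_natCast, hP_def]
    have hPr : P * t = r ^ k := by
      rw [hP_def, ht_def, hr_def, div_pow]
      field_simp
    have : ‖b m‖ = ‖f m‖ * P := by
      rw [habsm]
      field_simp
    rw [this]
    calc ‖f m‖ * P ≤ (((n:ℝ)+1) ^ (-c) + (t * ‖T‖ + ∑ j ∈ Finset.range m, ‖b j‖)) * P :=
          mul_le_mul_of_nonneg_right hfm_norm hP0.le
      _ = P * ((n:ℝ)+1) ^ (-c) + P * (∑ j ∈ Finset.range m, ‖b j‖) + (P * t) * ‖T‖ := by ring
      _ = P * ((n:ℝ)+1) ^ (-c) + P * (∑ j ∈ Finset.range m, ‖b j‖) + ‖T‖ * r ^ k := by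
          rw [hPr]; ring
  have hlim : Tendsto (fun n : ℕ => P * ((n:ℝ)+1) ^ (-c) +
      P * (∑ j ∈ Finset.range m, ‖(T (lp.single 1 n (1:ℂ))) j‖)) atTop (𝓝 0) := by
    have h1 : Tendsto (fun n : ℕ => ((n:ℝ)+1) ^ (-c)) atTop (𝓝 0) :=
      (tendsto_rpow_neg_atTop hc).comp
        (tendsto_atTop_add_const_right _ 1 tendsto_natCast_atTop_atTop)
    have h2 : Tendsto (fun n : ℕ => ∑ j ∈ Finset.range m, ‖(T (lp.single 1 n (1:ℂ))) j‖)
        atTop (𝓝 0) := by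
      have := tendsto_finset_sum (Finset.range m)
        (fun j hj => ((IH j (Finset.mem_range.1 hj)).norm))
      simpa using this
    have := (h1.const_mul P).add (h2.const_mul P)
    simpa using this
  filter_upwards [hlim.eventually_lt_const (by linarith : (0:ℝ) < ε/2)] with n hn
  calc ‖(T (lp.single 1 n (1:ℂ))) m‖ ≤ _ := key n
    _ < ε/2 + ε/2 := by linarith
    _ = ε := by ring

lemma compact_to_tendsto (hT : IsCompOp φ T)
    (hanal : DifferentiableOn ℂ φ {s : ℂ | 0 < s.re})
    (hnc : ∃ s₁ s₂ : ℂ, 0 < s₁.re ∧ 0 < s₂.re ∧ φ s₁ ≠ φ s₂)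
    (hc : IsCompactOperator ⇑T) :
    Tendsto (fun n : ℕ => ‖T (lp.single 1 n (1:ℂ))‖) atTop (𝓝 0) := by
  obtain ⟨K, hK, hTK⟩ :=
    IsCompactOperator.image_closedBall_subset_compact (f := (T : l1N →ₗ[ℂ] l1N)) hc 1
  have hmem : ∀ n : ℕ, T (lp.single 1 n (1:ℂ)) ∈ K := by
    intro n
    apply hTK
    exact ⟨_, by rw [Metric.mem_closedBall, dist_zero_right, l1_norm_single], rfl⟩
  apply tendsto_of_subseq_tendsto
  intro ns hns
  obtain ⟨L, hLK, ms, hms, hconv⟩ := hK.tendsto_subseq (fun k => hmem (ns k))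
  have hevalcont : ∀ j : ℕ, Continuous (fun b : l1N => b j) := by
    intro j
    exact (continuous_apply j).comp (lp.uniformContinuous_coe (p := 1)).continuous
  have hL0 : L = 0 := by
    apply lp.ext
    funext j
    have h1 : Tendsto (fun k => (T (lp.single 1 (ns (ms k)) (1:ℂ))) j) atTop (𝓝 (L j)) :=
      ((hevalcont j).continuousAt.tendsto).comp hconv
    have h2 : Tendsto (fun k => (T (lp.single 1 (ns (ms k)) (1:ℂ))) j) atTop (𝓝 0) :=
      (coord_tendsto hT hanal hnc j).comp (hns.comp hms.tendsto_atTop)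
    have : L j = 0 := tendsto_nhds_unique h1 h2
    simpa using this
  refine ⟨ms, ?_⟩
  rw [hL0] at hconv
  have := hconv.norm
  simpa using this

def coordCLM (n : ℕ) : l1N →L[ℂ] ℂ :=
  LinearMap.mkContinuous
    { toFun := fun a => a n
      map_add' := fun a b => by simpa using congrFun (lp.coeFn_add a b) n
      map_smul' := fun c a => by simpa using congrFun (lp.coeFn_smul c a) n }
    1 (fun a => by rw [one_mul]; exact lp.norm_apply_le_norm one_ne_zero a n)

@[simp] lemma coordCLM_apply (n : ℕ) (a : l1N) : coordCLM n a = a n := rfl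

lemma rankone_compact (g : l1N →L[ℂ] ℂ) (v : l1N) :
    IsCompactOperator (fun a : l1N => g a • v) := by
  refine ⟨(fun c : ℂ => c • v) '' Metric.closedBall 0 ‖g‖, ?_, ?_⟩
  · exact (isCompact_closedBall (0:ℂ) ‖g‖).image (continuous_id.smul continuous_const)
  · apply Filter.mem_of_superset (Metric.closedBall_mem_nhds (0:l1N) one_pos)
    intro a ha
    refine ⟨g a, ?_, rfl⟩
    rw [Metric.mem_closedBall, dist_zero_right]
    calc ‖g a‖ ≤ ‖g‖ * ‖a‖ := g.le_opNorm a
      _ ≤ ‖g‖ * 1 := by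
          have : ‖a‖ ≤ 1 := by simpa [dist_zero_right] using ha
          exact mul_le_mul_of_nonneg_left this (norm_nonneg _)
      _ = ‖g‖ := mul_one _

lemma sum_compact (s : Finset ℕ) (v : ℕ → l1N) :
    IsCompactOperator (fun a : l1N => ∑ n ∈ s, coordCLM n a • v n) := by
  induction s using Finset.cons_induction with
  | empty => simp only [Finset.sum_empty]; exact isCompactOperator_zero (M₁ := l1N) (M₂ := l1N)
  | cons i s hi ih =>
    have := (rankone_compact (coordCLM i) (v i)).add ih
    have heq : (fun a : l1N => ∑ n ∈ Finset.cons i s hi, coordCLM n a • v n)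
        = ((fun a : l1N => coordCLM i a • v i) + fun a => ∑ n ∈ s, coordCLM n a • v n) := by
      funext a
      simp [Finset.sum_cons, Finset.sum_insert hi]
    rw [heq]
    exact this

def FN (T : l1N →L[ℂ] l1N) (N : ℕ) : l1N →L[ℂ] l1N :=
  ∑ n ∈ Finset.range N, (coordCLM n).smulRight (T (lp.single 1 n (1:ℂ)))

lemma FN_apply (T : l1N →L[ℂ] l1N) (N : ℕ) (a : l1N) :
    FN T N a = ∑ n ∈ Finset.range N, a n • T (lp.single 1 n (1:ℂ)) := by
  simp [FN, ContinuousLinearMap.sum_apply]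

lemma FN_compact (T : l1N →L[ℂ] l1N) (N : ℕ) : IsCompactOperator ⇑(FN T N) := by
  have := sum_compact (Finset.range N) (fun n => T (lp.single 1 n (1:ℂ)))
  have heq : ⇑(FN T N) = fun a : l1N => ∑ n ∈ Finset.range N,
      coordCLM n a • T (lp.single 1 n (1:ℂ)) := by
    funext a
    rw [FN_apply]
    simp
  rw [heq]
  exact this

lemma tail_bound (T : l1N →L[ℂ] l1N) (a : l1N) (N : ℕ) (ε : ℝ)
    (hN₀ : ∀ n, N ≤ n → ‖T (lp.single 1 n (1:ℂ))‖ ≤ ε/2) (hε : 0 ≤ ε) (S : l1N)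
    (hTa : HasSum (fun n : ℕ => a n • T (lp.single 1 n (1:ℂ))) S) :
    ‖S - ∑ i ∈ Finset.range N, a i • T (lp.single 1 i (1:ℂ))‖ ≤ (ε/2) * ‖a‖ := by
  set g : ℕ → l1N := fun n => a n • T (lp.single 1 n (1:ℂ)) with hg
  have hsummg : Summable (fun n => ‖g n‖) := by
    apply Summable.of_nonneg_of_le (fun _ => norm_nonneg _) _ ((l1_summable a).mul_right ‖T‖)
    intro n
    rw [hg, norm_smul]
    exact mul_le_mul_of_nonneg_left (norm_op_single_le T n) (norm_nonneg _)
  have htail : HasSum (fun n => g (n + N)) (S - ∑ i ∈ Finset.range N, g i) := by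
    rw [hasSum_nat_add_iff (f := g) N]
    simpa using hTa
  rw [← htail.tsum_eq]
  calc ‖∑' n, g (n + N)‖ ≤ ∑' n, ‖g (n + N)‖ :=
        norm_tsum_le_tsum_norm ((summable_nat_add_iff (f := fun n : ℕ => ‖g n‖) N).2 hsummg)
    _ ≤ ∑' n, (ε/2) * ‖a (n + N)‖ := by
        apply Summable.tsum_le_tsum _ ((summable_nat_add_iff (f := fun n : ℕ => ‖g n‖) N).2 hsummg)
          (((summable_nat_add_iff (f := fun n : ℕ => ‖a n‖) N).2 (l1_summable a)).mul_left (ε/2))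
        intro n
        rw [hg, norm_smul, mul_comm]
        exact mul_le_mul_of_nonneg_right (hN₀ (n + N) (Nat.le_add_left N n)) (norm_nonneg _)
    _ = (ε/2) * ∑' n, ‖a (n + N)‖ := tsum_mul_left
    _ ≤ (ε/2) * ‖a‖ := by
        apply mul_le_mul_of_nonneg_left _ (by linarith)
        have hsplit := Summable.sum_add_tsum_nat_add (f := fun n => ‖a n‖) N (l1_summable a)
        rw [l1_norm_eq]
        have hpos : 0 ≤ ∑ i ∈ Finset.range N, ‖a i‖ :=
          Finset.sum_nonneg fun _ _ => norm_nonneg _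
        linarith

lemma hasSum_smul_single (T : l1N →L[ℂ] l1N) (a : l1N) :
    HasSum (fun n : ℕ => a n • T (lp.single 1 n (1:ℂ))) (T a) := by
  haveI : Fact ((1:ℝ≥0∞) ≤ 1) := ⟨le_rfl⟩
  have h1 : HasSum (fun n : ℕ => lp.single 1 n (a n)) a :=
    lp.hasSum_single (by norm_num) a
  have h2 := h1.mapL T
  have heq : ∀ n : ℕ, T (lp.single 1 n (a n)) = a n • T (lp.single 1 n (1:ℂ)) := by
    intro n
    rw [← map_smul]
    congr 1
    rw [← lp.single_smul]
    congr 1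
    simp
  simpa [heq] using h2

lemma tendsto_to_compact {T : l1N →L[ℂ] l1N}
    (h : Tendsto (fun n : ℕ => ‖T (lp.single 1 n (1:ℂ))‖) atTop (𝓝 0)) :
    IsCompactOperator ⇑T := by
  have hconv : Tendsto (FN T) atTop (𝓝 T) := by
    rw [Metric.tendsto_atTop]
    intro ε hε
    obtain ⟨N₀, hN₀⟩ := (Metric.tendsto_atTop.1 h) (ε/2) (by linarith)
    refine ⟨N₀, fun N hN => ?_⟩
    rw [dist_eq_norm]
    have hopb : ‖FN T N - T‖ ≤ ε/2 := by
      apply ContinuousLinearMap.opNorm_le_bound _ (by linarith)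
      intro a
      have h1 : ‖(FN T N - T) a‖ =
          ‖T a - ∑ i ∈ Finset.range N, a i • T (lp.single 1 i (1:ℂ))‖ := by
        rw [ContinuousLinearMap.sub_apply, FN_apply, norm_sub_rev]
      rw [h1]
      apply tail_bound T a N ε _ hε.le _ (hasSum_smul_single T a)
      intro n hn
      have := hN₀ n (le_trans hN hn)
      rw [Real.dist_eq, sub_zero] at this
      exact (le_abs_self _).trans this.le
    calc ‖FN T N - T‖ ≤ ε/2 := hopb
      _ < ε := by linarith
  exact isCompactOperator_of_tendsto hconv (Eventually.of_forall (FN_compact T))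

end Aux

/-- Theorem 2.3 (b)(i).  Let `φ` be a non-constant analytic function on
`ℂ₀` of the form `φ(s) = c₀ s + ψ(s)` with `c₀ ∈ ℕ₀`, `ψ ∈ 𝒟`, such that the composition
operator `C_φ` maps `𝒜⁺` into itself.  Then `C_φ` is compact iff `‖n^{-φ}‖_{𝒜⁺} → 0`
(note `‖n^{-φ}‖_{𝒜⁺} = ‖T(δ_n)‖` since `n^{-φ} = C_φ(n^{-s})`); and in that case
`φ(ℂ₀) ⊆ ℂ_δ` for some `δ > 0`, i.e. `re (φ s) ≥ δ` on `ℂ₀`. -/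
theorem statement_2 (φ ψ : ℂ → ℂ) (c₀ : ℕ)
    (hform : ∀ s : ℂ, 0 < s.re → φ s = (c₀ : ℂ) * s + ψ s)
    (hψ : MemD ψ)
    (hanal : DifferentiableOn ℂ φ {s : ℂ | 0 < s.re})
    (hnc : ∃ s₁ s₂ : ℂ, 0 < s₁.re ∧ 0 < s₂.re ∧ φ s₁ ≠ φ s₂)
    (T : l1N →L[ℂ] l1N) (hT : IsCompOp φ T) :
    (IsCompactOperator ⇑T ↔
      Tendsto (fun n : ℕ => ‖T (lp.single 1 n (1 : ℂ))‖) atTop (nhds 0)) ∧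
    (IsCompactOperator ⇑T →
      ∃ δ : ℝ, 0 < δ ∧ ∀ s : ℂ, 0 < s.re → δ ≤ (φ s).re) := by
  have hiff : IsCompactOperator ⇑T ↔
      Tendsto (fun n : ℕ => ‖T (lp.single 1 n (1 : ℂ))‖) atTop (nhds 0) := by
    constructor
    · exact fun hc => compact_to_tendsto hT hanal hnc hc
    · exact fun h => tendsto_to_compact h
  refine ⟨hiff, ?_⟩
  intro hc
  have h := hiff.1 hc
  obtain ⟨n, hn1, hn2⟩ : ∃ n : ℕ, 1 ≤ n ∧ ‖T (lp.single 1 n (1:ℂ))‖ < 1/2 := by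
    obtain ⟨n, hn⟩ := ((h.eventually_lt_const (by norm_num : (0:ℝ) < 1/2)).and
      (eventually_ge_atTop 1)).exists
    exact ⟨n, hn.2, hn.1⟩
  have hb2 : (2:ℝ) ≤ (n:ℝ)+1 := by
    have : (1:ℝ) ≤ (n:ℝ) := by exact_mod_cast hn1
    linarith
  have hbpos : (0:ℝ) < (n:ℝ)+1 := by linarith
  have hlogb : 0 < Real.log ((n:ℝ)+1) := Real.log_pos (by linarith)
  refine ⟨Real.log 2 / Real.log ((n:ℝ)+1), div_pos (Real.log_pos one_lt_two) hlogb, ?_⟩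
  intro s hs
  have hval := val_le_norm hT n hs
  have h1 : ((n:ℝ)+1) ^ (-(φ s).re) ≤ 1/2 := le_of_lt (lt_of_le_of_lt hval hn2)
  have h2 : Real.log (((n:ℝ)+1) ^ (-(φ s).re)) ≤ Real.log (1/2) :=
    Real.log_le_log (Real.rpow_pos_of_pos hbpos _) h1
  rw [Real.log_rpow hbpos, one_div, Real.log_inv] at h2
  rw [div_le_iff₀ hlogb]
  nlinarith
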